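/- Let A be a Banach K-algebra, f ∈ A a central element, and M a Noetherian Banach A-module. Then M⟨t⟩ has no (t − f)-torsion: if (t − f)·(Σ_{j≥0} t^j m_j) = 0 in M⟨t⟩ then all m_j = 0. -/

import Mathlib

open Filter Topology

/-- Coefficientwise multiplication by `t − f` on the module `M⟨t⟩` of convergent power
series `Σ tʲ mⱼ`, represented by their coefficient sequences `m : ℕ → M`:
the `j`-th coefficient of `(t − f)·Σ tʲ mⱼ` is `m_{j−1} − f • m_j` (with `m_{−1} = 0`). -/
noncomputable def mulTSubF {A M : Type*} [Ring A] [AddCommGroup M] [Module A M]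
    (f : A) (m : ℕ → M) : ℕ → M :=
  fun j => (if j = 0 then 0 else m (j - 1)) - f • m j

/-- Let `A` be a Banach `K`-algebra, `f ∈ A` a central element, and `M` a
Noetherian Banach `A`-module.  Then `M⟨t⟩` has no `(t − f)`-torsion: if
`(t − f)·(Σ_{j≥0} tʲ mⱼ) = 0` in `M⟨t⟩` then all `mⱼ = 0`. -/
theorem tate_module_no_t_sub_f_torsion
    {K : Type*} [NontriviallyNormedField K] [CompleteSpace K]
    {A : Type*} [NormedRing A] [NormedAlgebra K A] [CompleteSpace A]
    {M : Type*} [NormedAddCommGroup M] [Module A M] [IsBoundedSMul A M] [CompleteSpace M]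
    [IsNoetherian A M]
    (f : A) (hf : ∀ a : A, f * a = a * f)
    (m : ℕ → M) (hm : Tendsto m atTop (𝓝 0))
    (h : mulTSubF f m = 0) : m = 0 := by
  -- powers of `f` are central
  have hf' : ∀ (k : ℕ) (a : A), f ^ k * a = a * f ^ k := by
    intro k a
    induction k with
    | zero => simp
    | succ k ih => rw [pow_succ, mul_assoc, hf, ← mul_assoc, ih, mul_assoc]
  -- extract the coefficient relations
  have h0 : f • m 0 = 0 := by
    have := congrFun h 0
    simp only [mulTSubF, if_true, eq_self_iff_true, Pi.zero_apply, zero_sub,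
      neg_eq_zero] at this
    exact this
  have hstep : ∀ j, m j = f • m (j + 1) := by
    intro j
    have := congrFun h (j + 1)
    simp only [mulTSubF, Nat.add_sub_cancel, Pi.zero_apply, Nat.succ_ne_zero,
      if_neg (Nat.succ_ne_zero j)] at this
    exact sub_eq_zero.mp this
  have hiter : ∀ j k, m j = f ^ k • m (j + k) := by
    intro j k
    induction k with
    | zero => simp
    | succ k ih =>
        rw [ih, hstep (j + k), ← mul_smul, ← pow_succ]
        rfl
  -- `f` acting by `f^k` as an `A`-linear map (uses centrality)
  let g : ℕ → M →ₗ[A] M := fun k =>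
    { toFun := fun x => f ^ k • x
      map_add' := fun x y => smul_add _ _ _
      map_smul' := fun a x => by
        simp only [RingHom.id_apply]
        rw [← mul_smul, ← mul_smul, hf'] }
  -- every `m j` is killed by `f ^ (j+1)`
  have hkill : ∀ j, f ^ (j + 1) • m j = 0 := by
    intro j
    have h' := hiter 0 j
    rw [Nat.zero_add] at h'
    calc f ^ (j + 1) • m j = f • (f ^ j • m j) := by rw [← mul_smul, ← pow_succ']
      _ = f • m 0 := by rw [← h']
      _ = 0 := h0
  -- the ascending chain of kernels
  have hmono : Monotone fun k => LinearMap.ker (g k) := by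
    apply monotone_nat_of_le_succ
    intro k x hx
    simp only [LinearMap.mem_ker, LinearMap.coe_mk, AddHom.coe_mk, g] at hx ⊢
    rw [pow_succ', mul_smul, hx, smul_zero]
  obtain ⟨n, hn⟩ := monotone_stabilizes_iff_noetherian.mpr ‹IsNoetherian A M›
    ⟨fun k => LinearMap.ker (g k), hmono⟩
  -- all `m j` lie in `ker (g n)`
  have hmem : ∀ j, m j ∈ LinearMap.ker (g n) := by
    intro j
    have hj : m j ∈ LinearMap.ker (g (j + 1)) := by
      simpa [g, LinearMap.mem_ker] using hkill j
    have h1 : LinearMap.ker (g (j + 1)) ≤ LinearMap.ker (g (max n (j + 1))) :=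
      hmono (le_max_right _ _)
    have h2 : LinearMap.ker (g n) = LinearMap.ker (g (max n (j + 1))) :=
      hn (max n (j + 1)) (le_max_left _ _)
    rw [h2]
    exact h1 hj
  -- conclude
  funext j
  have := hmem (j + n)
  simp only [LinearMap.mem_ker, LinearMap.coe_mk, AddHom.coe_mk, g] at this
  rw [Pi.zero_apply, hiter j n, this]
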